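/- (QFT under general linear transformation, split form) Let A ∈ GL(ℝ²) and f ∈ L²(ℝ²;ℍ) integrable. Then the QFT of x ↦ f(Ax) equals |det A⁻¹|·( f̂₋((A⁻¹)ᵀ u) + f̂₊(U₁ (A⁻¹)ᵀ U₁ u) ), where U₁ is the reflection (u,v) ↦ (-u,v) (reflection at the hyperplane normal to e₁), and f̂± are the QFTs of the split parts f± = (1/2)(f ± i f j). -/

import Mathlib

open Quaternion MeasureTheory Real Matrix

noncomputable def qi : ℍ[ℝ] := ⟨0,1,0,0⟩
noncomputable def qj : ℍ[ℝ] := ⟨0,0,1,0⟩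
noncomputable def qk : ℍ[ℝ] := ⟨0,0,0,1⟩
/-- exp(θ·v) = cos θ + v sin θ for a quaternion unit v with v² = -1. -/
noncomputable def qexp (v : ℍ[ℝ]) (θ : ℝ) : ℍ[ℝ] := (Real.cos θ : ℍ[ℝ]) + Real.sin θ • v

/-- The two-sided quaternion Fourier transform. -/
noncomputable def QFT (f : ℝ × ℝ → ℍ[ℝ]) (u v : ℝ) : ℍ[ℝ] :=
  ∫ p : ℝ × ℝ, qexp qi (-(p.1 * u)) * f p * qexp qj (-(p.2 * v))

/-- Action of a 2×2 real matrix on ℝ². -/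
def act (M : Matrix (Fin 2) (Fin 2) ℝ) (p : ℝ × ℝ) : ℝ × ℝ :=
  (M 0 0 * p.1 + M 0 1 * p.2, M 1 0 * p.1 + M 1 1 * p.2)

/-- Reflection at the hyperplane (line) normal to e₁. -/
def refl1 (p : ℝ × ℝ) : ℝ × ℝ := (-p.1, p.2)

/-! ### Auxiliary lemmas -/

@[simp] lemma qi_re : qi.re = 0 := rfl
@[simp] lemma qi_imI : qi.imI = 1 := rfl
@[simp] lemma qi_imJ : qi.imJ = 0 := rfl
@[simp] lemma qi_imK : qi.imK = 0 := rfl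
@[simp] lemma qj_re : qj.re = 0 := rfl
@[simp] lemma qj_imI : qj.imI = 0 := rfl
@[simp] lemma qj_imJ : qj.imJ = 1 := rfl
@[simp] lemma qj_imK : qj.imK = 0 := rfl

lemma toLin_eq_act (A : Matrix (Fin 2) (Fin 2) ℝ) (p : ℝ × ℝ) :
    Matrix.toLin (Module.Basis.finTwoProd ℝ) (Module.Basis.finTwoProd ℝ) A p = act A p := by
  simp [Matrix.toLin_apply, Fin.sum_univ_two, Matrix.mulVec, dotProduct,
    Module.Basis.coe_finTwoProd_repr, act, Module.Basis.finTwoProd_zero, Module.Basis.finTwoProd_one,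
    Prod.ext_iff]

lemma act_act (M N : Matrix (Fin 2) (Fin 2) ℝ) (p : ℝ × ℝ) :
    act M (act N p) = act (M * N) p := by
  simp only [act, Matrix.mul_apply, Fin.sum_univ_two, Prod.mk.injEq]
  constructor <;> ring

lemma act_one (p : ℝ × ℝ) : act 1 p = p := by
  simp [act, Matrix.one_apply]

lemma continuous_act (M : Matrix (Fin 2) (Fin 2) ℝ) : Continuous (act M) := by
  unfold act; fun_prop

/-- Change of variables for a linear action on ℝ². -/
lemma integral_act {A : Matrix (Fin 2) (Fin 2) ℝ} (hA : A.det ≠ 0)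
    (g : ℝ × ℝ → ℍ[ℝ]) (hg : AEStronglyMeasurable g volume) :
    ∫ p : ℝ × ℝ, g (act A p) = |A.det⁻¹| • ∫ p : ℝ × ℝ, g p := by
  set L := Matrix.toLin (Module.Basis.finTwoProd ℝ) (Module.Basis.finTwoProd ℝ) A with hL
  have hdet : LinearMap.det L = A.det := by rw [hL]; exact LinearMap.det_toLin _ _
  have hmap : Measure.map L volume = ENNReal.ofReal |A.det⁻¹| • volume := by
    rw [Measure.map_linearMap_addHaar_eq_smul_addHaar volume (by rw [hdet]; exact hA), hdet]
  have hgm : AEStronglyMeasurable g (Measure.map L volume) := by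
    rw [hmap]
    exact hg.mono_ac (Measure.smul_absolutelyContinuous)
  have h1 : ∫ p : ℝ × ℝ, g (act A p) = ∫ p : ℝ × ℝ, g (L p) := by
    congr 1; funext p; rw [toLin_eq_act]
  rw [h1, ← integral_map (L.continuous_of_finiteDimensional.measurable.aemeasurable) hgm,
    hmap, integral_smul_measure, ENNReal.toReal_ofReal (abs_nonneg _)]

lemma norm_qexp_qi (θ : ℝ) : ‖qexp qi θ‖ = 1 := by
  have h : normSq (qexp qi θ) = 1 := by rw [qexp, normSq_def']; simp
  have := Quaternion.normSq_eq_norm_mul_self (qexp qi θ)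
  nlinarith [norm_nonneg (qexp qi θ)]

lemma norm_qexp_qj (θ : ℝ) : ‖qexp qj θ‖ = 1 := by
  have h : normSq (qexp qj θ) = 1 := by rw [qexp, normSq_def']; simp
  have := Quaternion.normSq_eq_norm_mul_self (qexp qj θ)
  nlinarith [norm_nonneg (qexp qj θ)]

lemma continuous_qexp (v : ℍ[ℝ]) {α : ℝ × ℝ → ℝ} (hα : Continuous α) :
    Continuous fun q => qexp v (α q) := by
  simp only [qexp]
  exact (Quaternion.continuous_coe.comp (Real.continuous_cos.comp hα)).add
    ((Real.continuous_sin.comp hα).smul continuous_const)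

lemma integrable_kernel {g : ℝ × ℝ → ℍ[ℝ]} (hg : Integrable g)
    {α β : ℝ × ℝ → ℝ} (hα : Continuous α) (hβ : Continuous β) :
    Integrable fun q => qexp qi (α q) * g q * qexp qj (β q) := by
  refine Integrable.mono' hg.norm
    (((continuous_qexp qi hα).aestronglyMeasurable.mul hg.1).mul
      (continuous_qexp qj hβ).aestronglyMeasurable)
    (Filter.Eventually.of_forall fun q => ?_)
  rw [norm_mul, norm_mul, norm_qexp_qi, norm_qexp_qj, one_mul, mul_one]

set_option maxHeartbeats 1000000 in
lemma pointwise_split (x : ℍ[ℝ]) (a₁ a₂ b₁ b₂ : ℝ) :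
    qexp qi (-(a₁+a₂)) * x * qexp qj (-(b₁+b₂)) =
      qexp qi (-(a₁+b₁)) * ((2:ℝ)⁻¹ • (x - qi*x*qj)) * qexp qj (-(a₂+b₂))
      + qexp qi (-(a₁-b₁)) * ((2:ℝ)⁻¹ • (x + qi*x*qj)) * qexp qj (-(b₂-a₂)) := by
  ext <;>
    simp [qexp, Real.cos_add, Real.sin_add, Real.cos_sub, Real.sin_sub] <;>
    ring

theorem QFT_GL_transform (f : ℝ × ℝ → ℍ[ℝ]) (A : Matrix (Fin 2) (Fin 2) ℝ)
    (hA : IsUnit A.det) (u v : ℝ)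
    (hf : Integrable f) :
    let fp : ℝ × ℝ → ℍ[ℝ] := fun p => (2:ℝ)⁻¹ • (f p + qi * f p * qj)
    let fm : ℝ × ℝ → ℍ[ℝ] := fun p => (2:ℝ)⁻¹ • (f p - qi * f p * qj)
    let wm : ℝ × ℝ := act (A⁻¹ᵀ) (u, v)
    let wp : ℝ × ℝ := refl1 (act (A⁻¹ᵀ) (refl1 (u, v)))
    QFT (fun p => f (act A p)) u v =
      |A⁻¹.det| • (QFT fm wm.1 wm.2 + QFT fp wp.1 wp.2) := by
  intro fp fm wm wp
  have hdet : A.det ≠ 0 := hA.ne_zero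
  set B := A⁻¹ with hB
  -- the integrand after change of variables
  set H : ℝ × ℝ → ℍ[ℝ] :=
    fun q => qexp qi (-((act B q).1 * u)) * f q * qexp qj (-((act B q).2 * v)) with hH
  -- continuity of the phase functions
  have hc1 : Continuous fun q : ℝ × ℝ => -((act B q).1 * u) :=
    (((continuous_act B).fst).mul continuous_const).neg
  have hc2 : Continuous fun q : ℝ × ℝ => -((act B q).2 * v) :=
    (((continuous_act B).snd).mul continuous_const).neg
  have hHm : AEStronglyMeasurable H volume :=
    ((continuous_qexp qi hc1).aestronglyMeasurable.mul hf.1).mul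
      (continuous_qexp qj hc2).aestronglyMeasurable
  -- Step 1: rewrite the LHS as ∫ H (act A p)
  have hBA : ∀ p : ℝ × ℝ, act B (act A p) = p := by
    intro p
    rw [act_act, hB, Matrix.nonsing_inv_mul A hA, act_one]
  have step1 : QFT (fun p => f (act A p)) u v = ∫ p : ℝ × ℝ, H (act A p) := by
    unfold QFT
    congr 1; funext p
    rw [hH]; simp only [hBA p]
  -- Step 2: change of variables
  have step2 : ∫ p : ℝ × ℝ, H (act A p) = |A.det⁻¹| • ∫ q : ℝ × ℝ, H q :=
    integral_act hdet H hHm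
  -- integrability of the split parts
  have hfm : Integrable fm := by
    have : Integrable (fun p => f p - qi * f p * qj) :=
      hf.sub ((hf.const_mul qi).mul_const qj)
    exact this.smul ((2:ℝ)⁻¹)
  have hfp : Integrable fp := by
    have : Integrable (fun p => f p + qi * f p * qj) :=
      hf.add ((hf.const_mul qi).mul_const qj)
    exact this.smul ((2:ℝ)⁻¹)
  -- Step 3: pointwise splitting of H
  have hsplit : ∀ q : ℝ × ℝ,
      H q = qexp qi (-(q.1 * wm.1)) * fm q * qexp qj (-(q.2 * wm.2))
        + qexp qi (-(q.1 * wp.1)) * fp q * qexp qj (-(q.2 * wp.2)) := by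
    intro q
    have h := pointwise_split (f q) (B 0 0 * q.1 * u) (B 0 1 * q.2 * u)
      (B 1 0 * q.1 * v) (B 1 1 * q.2 * v)
    have e1 : -((act B q).1 * u) = -(B 0 0 * q.1 * u + B 0 1 * q.2 * u) := by
      simp only [act]; ring
    have e2 : -((act B q).2 * v) = -(B 1 0 * q.1 * v + B 1 1 * q.2 * v) := by
      simp only [act]; ring
    have e3 : -(q.1 * wm.1) = -(B 0 0 * q.1 * u + B 1 0 * q.1 * v) := by
      simp only [wm, act, Matrix.transpose_apply]; ring
    have e4 : -(q.2 * wm.2) = -(B 0 1 * q.2 * u + B 1 1 * q.2 * v) := by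
      simp only [wm, act, Matrix.transpose_apply]; ring
    have e5 : -(q.1 * wp.1) = -(B 0 0 * q.1 * u - B 1 0 * q.1 * v) := by
      simp only [wp, refl1, act, Matrix.transpose_apply]; ring
    have e6 : -(q.2 * wp.2) = -(B 1 1 * q.2 * v - B 0 1 * q.2 * u) := by
      simp only [wp, refl1, act, Matrix.transpose_apply]; ring
    rw [hH]
    simp only [e1, e2, e3, e4, e5, e6]
    exact h
  -- Step 4: split the integral
  have him : Integrable fun q : ℝ × ℝ =>
      qexp qi (-(q.1 * wm.1)) * fm q * qexp qj (-(q.2 * wm.2)) :=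
    integrable_kernel hfm ((continuous_fst.mul continuous_const).neg)
      ((continuous_snd.mul continuous_const).neg)
  have hip : Integrable fun q : ℝ × ℝ =>
      qexp qi (-(q.1 * wp.1)) * fp q * qexp qj (-(q.2 * wp.2)) :=
    integrable_kernel hfp ((continuous_fst.mul continuous_const).neg)
      ((continuous_snd.mul continuous_const).neg)
  have step3 : ∫ q : ℝ × ℝ, H q = QFT fm wm.1 wm.2 + QFT fp wp.1 wp.2 := by
    unfold QFT
    rw [← integral_add him hip]
    congr 1; funext q
    exact hsplit q
  have hdetinv : |A⁻¹.det| = |A.det⁻¹| := by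
    rw [Matrix.det_nonsing_inv, Ring.inverse_eq_inv']
  rw [step1, step2, step3, hdetinv]
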